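/- With G = M ⋊ C as above, if m ∈ (1 - α)M and (m_1,...,m_{n-1}, m·a) generates G, then (m_1,...,m_{n-1}) generates M as an R-module. -/

import Mathlib

/-- The action of `C` on `M` by additive automorphisms, packaged as a homomorphism
`C →* MulAut (Multiplicative M)`, used to form the semidirect product `M ⋊ C`. -/
def sdAction (C M : Type*) [Group C] [AddCommGroup M] [DistribMulAction C M] :
    C →* MulAut (Multiplicative M) where
  toFun c := AddEquiv.toMultiplicative (DistribMulAction.toAddAut C M c)
  map_one' := by ext x; simp
  map_mul' c c' := by ext x; simp [mul_smul]

/-- If `m' ∈ (1 - α)M` and `(m_1, …, m_n, m'·a)` generates `G = M ⋊ C`, then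
`(m_1, …, m_n)` generates `M` as an `R = ℤ[C]/ann(M)`-module. -/
theorem stmt_11 {C M : Type*} [Group C] [AddCommGroup M] [DistribMulAction C M]
    (a : C) (hC : ∀ c : C, c ∈ Subgroup.zpowers a)
    (n : ℕ) (m : Fin n → M) (m' : M)
    (hm' : ∃ x : M, m' = x - a • x)
    (hgen : Subgroup.closure
        ((Set.range fun i : Fin n =>
            (⟨Multiplicative.ofAdd (m i), 1⟩ : Multiplicative M ⋊[sdAction C M] C)) ∪
          {(⟨Multiplicative.ofAdd m', a⟩ : Multiplicative M ⋊[sdAction C M] C)}) = ⊤) :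
    Submodule.span ℤ (Set.range fun p : C × Fin n => p.1 • m p.2) = ⊤ := by
  obtain ⟨x0, hx0⟩ := hm'
  set N := Submodule.span ℤ (Set.range fun p : C × Fin n => p.1 • m p.2) with hN
  have hsmul : ∀ (c : C) (z : M), z ∈ N → c • z ∈ N := by
    intro c z hz
    induction hz using Submodule.span_induction with
    | mem x hx =>
      obtain ⟨p, rfl⟩ := hx
      exact Submodule.subset_span ⟨(c * p.1, p.2), by simp [mul_smul]⟩
    | zero => simp
    | add x y _ _ hx hy => rw [smul_add]; exact N.add_mem hx hy
    | smul t x _ hx => rw [smul_comm]; exact N.smul_mem t hx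
  have key : ∀ (c : C) (x : Multiplicative M),
      Multiplicative.toAdd ((sdAction C M c) x) = c • Multiplicative.toAdd x := fun _ _ => rfl
  let H : Subgroup (Multiplicative M ⋊[sdAction C M] C) :=
    { carrier := { g | Multiplicative.toAdd g.left ∈ N }
      one_mem' := by simp
      mul_mem' := by
        intro g h hg hh
        simp only [Set.mem_setOf_eq, SemidirectProduct.mul_left, toAdd_mul, key] at *
        exact N.add_mem hg (hsmul _ _ hh)
      inv_mem' := by
        intro g hg
        simp only [Set.mem_setOf_eq, SemidirectProduct.inv_left, key, toAdd_inv] at *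
        exact hsmul _ _ (N.neg_mem hg) }
  -- conjugating automorphism
  set g0 : Multiplicative M ⋊[sdAction C M] C := ⟨Multiplicative.ofAdd (-x0), 1⟩ with hg0
  have htop : ∀ g : Multiplicative M ⋊[sdAction C M] C, g ∈ H := by
    have h2 : ((Set.range fun i : Fin n =>
            (⟨Multiplicative.ofAdd (m i), 1⟩ : Multiplicative M ⋊[sdAction C M] C)) ∪
          {(⟨Multiplicative.ofAdd m', a⟩ : Multiplicative M ⋊[sdAction C M] C)})
        ⊆ ↑(H.comap (MulAut.conj g0).toMonoidHom) := by
      rintro g (⟨i, rfl⟩ | rfl)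
      · show Multiplicative.toAdd (MulAut.conj g0 _).left ∈ N
        simp only [MulAut.conj_apply, SemidirectProduct.mul_left, SemidirectProduct.inv_left,
          SemidirectProduct.mul_right, hg0, key, toAdd_mul, toAdd_inv, toAdd_ofAdd,
          one_smul, inv_one, mul_one, one_mul, smul_neg, neg_neg, neg_smul]
        have hmem : m i ∈ N := by
          have := Submodule.subset_span (R := ℤ) (s := Set.range fun p : C × Fin n => p.1 • m p.2)
            ⟨((1 : C), i), rfl⟩
          simpa using this
        abel_nf
        simpa using hmem
      · show Multiplicative.toAdd (MulAut.conj g0 _).left ∈ N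
        simp only [MulAut.conj_apply, SemidirectProduct.mul_left, SemidirectProduct.inv_left,
          SemidirectProduct.mul_right, hg0, key, toAdd_mul, toAdd_inv, toAdd_ofAdd,
          one_smul, inv_one, mul_one, one_mul, smul_neg, neg_neg, neg_smul, hx0]
        have h0 : -x0 + (x0 - a • x0) + a • x0 = 0 := by abel
        rw [h0]
        exact N.zero_mem
    have h3 : H.comap (MulAut.conj g0).toMonoidHom = ⊤ := by
      rw [eq_top_iff, ← hgen, Subgroup.closure_le]
      exact h2
    intro g
    have h5 : (MulAut.conj g0).symm g ∈ H.comap (MulAut.conj g0).toMonoidHom :=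
      h3 ▸ Subgroup.mem_top _
    rw [Subgroup.mem_comap] at h5
    simp only [MulEquiv.coe_toMonoidHom, MulEquiv.apply_symm_apply] at h5
    exact h5
  rw [eq_top_iff]
  intro x _
  have := htop ⟨Multiplicative.ofAdd x, 1⟩
  exact this
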